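/- Let B be a separable finite-dimensional algebra over a field K. Then A over B is depth two if and only if M_n(A) over M_n(B) is depth two. -/

import Mathlib

open TensorProduct LinearMap

noncomputable section

variable {K : Type*} [CommRing K] {A B : Type*} [Ring A] [Ring B] [Algebra K A] [Algebra K B]

/-- Left multiplication by `a` on the first tensorand of `A ⊗[K] A`. -/
def lmulT (a : A) : A ⊗[K] A →ₗ[K] A ⊗[K] A := rTensor A (mulLeft K a)

/-- Right multiplication by `a` on the second tensorand of `A ⊗[K] A`. -/
def rmulT (a : A) : A ⊗[K] A →ₗ[K] A ⊗[K] A := lTensor A (mulRight K a)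

/-- The relations defining `A ⊗_B A` as a quotient of `A ⊗[K] A`; working modulo
`relJ f` amounts to working in the tensor square `A ⊗_B A` of the extension `f`. -/
def relJ (f : B →ₐ[K] A) : Submodule K (A ⊗[K] A) :=
  Submodule.span K {z | ∃ x b y, z = (x * f b) ⊗ₜ[K] y - x ⊗ₜ[K] (f b * y)}

/-- `α` is a `B`-`B`-bimodule endomorphism of `A`. -/
def IsBB (f : B →ₐ[K] A) (α : A →ₗ[K] A) : Prop :=
  (∀ b x, α (f b * x) = f b * α x) ∧ (∀ b x, α (x * f b) = α x * f b)

/-- `t` represents a `B`-central element of `A ⊗_B A`. -/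
def IsCent (f : B →ₐ[K] A) (t : A ⊗[K] A) : Prop :=
  ∀ b, lmulT (K := K) (f b) t - rmulT (f b) t ∈ relJ f

/-- `A ⊗_B A` is isomorphic, as a `B`-`A`-bimodule, to a direct summand of `A^N`
for some positive `N`: there is a split mono `ι` (with splitting `π`), both maps
being `B`-`A`-bimodule maps (everything taken modulo the relations `relJ f`). -/
def LeftD2 (f : B →ₐ[K] A) : Prop :=
  ∃ N : ℕ, 0 < N ∧ ∃ (ι : A ⊗[K] A →ₗ[K] (Fin N → A)) (π : (Fin N → A) →ₗ[K] A ⊗[K] A),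
    (∀ z ∈ relJ f, ι z = 0) ∧
    (∀ b z, ι (lmulT (f b) z) = fun i => f b * ι z i) ∧
    (∀ a z, ι (rmulT a z) = fun i => ι z i * a) ∧
    (∀ b (v : Fin N → A), π (fun i => f b * v i) - lmulT (f b) (π v) ∈ relJ f) ∧
    (∀ a (v : Fin N → A), π (fun i => v i * a) - rmulT a (π v) ∈ relJ f) ∧
    (∀ z, π (ι z) - z ∈ relJ f)

/-- `A ⊗_B A` is isomorphic, as an `A`-`B`-bimodule, to a direct summand of `A^N`. -/
def RightD2 (f : B →ₐ[K] A) : Prop :=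
  ∃ N : ℕ, 0 < N ∧ ∃ (ι : A ⊗[K] A →ₗ[K] (Fin N → A)) (π : (Fin N → A) →ₗ[K] A ⊗[K] A),
    (∀ z ∈ relJ f, ι z = 0) ∧
    (∀ a z, ι (lmulT a z) = fun i => a * ι z i) ∧
    (∀ b z, ι (rmulT (f b) z) = fun i => ι z i * f b) ∧
    (∀ a (v : Fin N → A), π (fun i => a * v i) - lmulT a (π v) ∈ relJ f) ∧
    (∀ b (v : Fin N → A), π (fun i => v i * f b) - rmulT (f b) (π v) ∈ relJ f) ∧
    (∀ z, π (ι z) - z ∈ relJ f)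

/-- `A ⊗_B A` is isomorphic, as an `A`-`A`-bimodule, to a direct summand of `A^N`:
H-separability of the extension `f`. -/
def HSep (f : B →ₐ[K] A) : Prop :=
  ∃ N : ℕ, 0 < N ∧ ∃ (ι : A ⊗[K] A →ₗ[K] (Fin N → A)) (π : (Fin N → A) →ₗ[K] A ⊗[K] A),
    (∀ z ∈ relJ f, ι z = 0) ∧
    (∀ a z, ι (lmulT a z) = fun i => a * ι z i) ∧
    (∀ a z, ι (rmulT a z) = fun i => ι z i * a) ∧
    (∀ a (v : Fin N → A), π (fun i => a * v i) - lmulT a (π v) ∈ relJ f) ∧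
    (∀ a (v : Fin N → A), π (fun i => v i * a) - rmulT a (π v) ∈ relJ f) ∧
    (∀ z, π (ι z) - z ∈ relJ f)


/-- `B` is a separable `K`-algebra: it has a separability idempotent. -/
def IsSepAlg (K B : Type*) [CommRing K] [Ring B] [Algebra K B] : Prop :=
  ∃ e : B ⊗[K] B, (LinearMap.mul' K B) e = 1 ∧
    ∀ b : B, ((b ⊗ₜ[K] (1 : B)) * e : B ⊗[K] B) = e * ((1 : B) ⊗ₜ[K] b)
section Aux
set_option linter.unusedSectionVars false

variable {n : ℕ} [NeZero n]

open Matrix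

/-- entry-extraction map `Mₙ(A) ⊗ Mₙ(A) → A ⊗ A`. -/
def phiT (p q : Fin n) :
    (Matrix (Fin n) (Fin n) A) ⊗[K] (Matrix (Fin n) (Fin n) A) →ₗ[K] A ⊗[K] A :=
  TensorProduct.lift <| LinearMap.mk₂ K (fun X Y => ∑ k, X p k ⊗ₜ[K] Y k q)
    (by intro X X' Y; simp [Matrix.add_apply, add_tmul, Finset.sum_add_distrib])
    (by intro c X Y; simp [Matrix.smul_apply, smul_tmul', Finset.smul_sum])
    (by intro X Y Y'; simp [Matrix.add_apply, tmul_add, Finset.sum_add_distrib])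
    (by intro c X Y; simp [Matrix.smul_apply, tmul_smul, Finset.smul_sum])

@[simp] lemma phiT_tmul (p q : Fin n) (X Y : Matrix (Fin n) (Fin n) A) :
    phiT (K := K) p q (X ⊗ₜ[K] Y) = ∑ k, X p k ⊗ₜ[K] Y k q := rfl

/-- corner-embedding map `A ⊗ A → Mₙ(A) ⊗ Mₙ(A)`. -/
def psiT (p q : Fin n) :
    A ⊗[K] A →ₗ[K] (Matrix (Fin n) (Fin n) A) ⊗[K] (Matrix (Fin n) (Fin n) A) :=
  TensorProduct.lift <| LinearMap.mk₂ K
    (fun x y => single p 0 x ⊗ₜ[K] single 0 q y)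
    (by intro x x' y; simp [single_add, add_tmul])
    (by intro c x y; simp [← smul_single, smul_tmul'])
    (by intro x y y'; simp [single_add, tmul_add])
    (by intro c x y; simp [← smul_single, tmul_smul])

@[simp] lemma psiT_tmul (p q : Fin n) (x y : A) :
    psiT (K := K) p q (x ⊗ₜ[K] y) =
      single p 0 x ⊗ₜ[K] single 0 q y := rfl

@[simp] lemma lmulT_tmul (a x y : A) :
    lmulT (K := K) a (x ⊗ₜ[K] y) = (a * x) ⊗ₜ[K] y := rfl

@[simp] lemma rmulT_tmul (a x y : A) :
    rmulT (K := K) a (x ⊗ₜ[K] y) = x ⊗ₜ[K] (y * a) := rfl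

lemma lmulT_one : lmulT (K := K) (1 : A) = LinearMap.id := by
  ext x y; simp

lemma rmulT_one : rmulT (K := K) (1 : A) = LinearMap.id := by
  ext x y; simp

lemma lmulT_zero : lmulT (K := K) (0 : A) = 0 := by
  ext x y; simp

lemma rmulT_zero : rmulT (K := K) (0 : A) = 0 := by
  ext x y; simp

end Aux
section Aux2
set_option linter.unusedSectionVars false
variable {n : ℕ} [NeZero n]
open Matrix

lemma mul_stdBasisMatrix_col (M : Matrix (Fin n) (Fin n) A) (l j : Fin n) (x : A) :
    M * single l j x = ∑ p, single p j (M p l * x) := by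
  ext r c
  simp [Matrix.mul_apply, Matrix.sum_apply, Matrix.single, Matrix.of_apply,
    mul_ite, ite_and, Finset.sum_ite_eq, Finset.sum_ite_eq']

lemma stdBasisMatrix_row_mul (M : Matrix (Fin n) (Fin n) A) (i l : Fin n) (y : A) :
    single i l y * M = ∑ q, single i q (y * M l q) := by
  ext r c
  simp [Matrix.mul_apply, Matrix.sum_apply, Matrix.single, Matrix.of_apply,
    ite_mul, ite_and, Finset.sum_ite_eq, Finset.sum_ite_eq']

lemma phiT_lmulT (M : Matrix (Fin n) (Fin n) A) (p q : Fin n)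
    (z : (Matrix (Fin n) (Fin n) A) ⊗[K] (Matrix (Fin n) (Fin n) A)) :
    phiT p q (lmulT M z) = ∑ l, lmulT (M p l) (phiT l q z) := by
  induction z using TensorProduct.induction_on with
  | zero => simp
  | tmul X Y =>
    simp only [lmulT_tmul, phiT_tmul, Matrix.mul_apply, sum_tmul, map_sum, lmulT_tmul]
    rw [Finset.sum_comm]
  | add z w hz hw => simp [map_add, hz, hw, Finset.sum_add_distrib]

lemma phiT_rmulT (M : Matrix (Fin n) (Fin n) A) (p q : Fin n)
    (z : (Matrix (Fin n) (Fin n) A) ⊗[K] (Matrix (Fin n) (Fin n) A)) :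
    phiT p q (rmulT M z) = ∑ l, rmulT (M l q) (phiT p l z) := by
  induction z using TensorProduct.induction_on with
  | zero => simp
  | tmul X Y =>
    simp only [rmulT_tmul, phiT_tmul, Matrix.mul_apply, tmul_sum, map_sum, rmulT_tmul]
    rw [Finset.sum_comm]
  | add z w hz hw => simp [map_add, hz, hw, Finset.sum_add_distrib]

lemma lmulT_psiT (M : Matrix (Fin n) (Fin n) A) (l q : Fin n) (u : A ⊗[K] A) :
    lmulT M (psiT l q u) = ∑ p, psiT p q (lmulT (M p l) u) := by
  induction u using TensorProduct.induction_on with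
  | zero => simp
  | tmul x y =>
    simp only [psiT_tmul, lmulT_tmul, mul_stdBasisMatrix_col, sum_tmul]
  | add z w hz hw => simp [map_add, hz, hw, Finset.sum_add_distrib]

lemma rmulT_psiT (M : Matrix (Fin n) (Fin n) A) (p l : Fin n) (u : A ⊗[K] A) :
    rmulT M (psiT p l u) = ∑ q, psiT p q (rmulT (M l q) u) := by
  induction u using TensorProduct.induction_on with
  | zero => simp
  | tmul x y =>
    simp only [psiT_tmul, rmulT_tmul, stdBasisMatrix_row_mul, tmul_sum]
  | add z w hz hw => simp [map_add, hz, hw, Finset.sum_add_distrib]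

lemma psiT_lmulT (c : A) (p q : Fin n) (u : A ⊗[K] A) :
    psiT p q (lmulT c u) = lmulT (single p p c) (psiT p q u) := by
  induction u using TensorProduct.induction_on with
  | zero => simp
  | tmul x y => simp [single_mul_single_same]
  | add z w hz hw => simp [map_add, hz, hw]

lemma psiT_rmulT (c : A) (p q : Fin n) (u : A ⊗[K] A) :
    psiT p q (rmulT c u) = rmulT (single q q c) (psiT p q u) := by
  induction u using TensorProduct.induction_on with
  | zero => simp
  | tmul x y => simp [single_mul_single_same]
  | add z w hz hw => simp [map_add, hz, hw]

lemma map_stdBasisMatrix (f : B →ₐ[K] A) (i j : Fin n) (b : B) :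
    (single i j b).map f = single i j (f b) := by
  ext r c
  simp only [Matrix.map_apply, Matrix.single, Matrix.of_apply]
  split <;> simp

lemma phiT_psiT (z : A ⊗[K] A) :
    phiT (K := K) (0 : Fin n) 0 (psiT 0 0 z) = z := by
  induction z using TensorProduct.induction_on with
  | zero => simp
  | tmul x y =>
    simp only [psiT_tmul, phiT_tmul]
    rw [Finset.sum_eq_single (0 : Fin n)]
    · simp
    · intro k _ hk
      simp [single_apply_of_ne, hk, Ne.symm hk]
    · simp
  | add z w hz hw => simp [map_add, hz, hw]

lemma stdBasisMatrix_sandwich (M : Matrix (Fin n) (Fin n) A) :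
    single (0 : Fin n) 0 (1 : A) * M * single 0 0 (1 : A) =
      single 0 0 (M 0 0) := by
  ext r c
  by_cases hr : r = 0 <;> by_cases hc : c = 0 <;>
    simp [hr, hc, Matrix.mul_apply, Matrix.single, Matrix.of_apply,
      ite_and, mul_ite, ite_mul, eq_comm, Finset.sum_ite_eq, Finset.sum_ite_eq']

end Aux2
section Aux3
set_option linter.unusedSectionVars false
variable {n : ℕ} [NeZero n] (f : B →ₐ[K] A)
open Matrix

lemma gen_mem_relJ (x b y) : (x * f b) ⊗ₜ[K] y - x ⊗ₜ[K] (f b * y) ∈ relJ f :=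
  Submodule.subset_span ⟨x, b, y, rfl⟩

lemma phiT_relJ (p q : Fin n) {z} (hz : z ∈ relJ (f.mapMatrix (m := Fin n))) :
    phiT p q z ∈ relJ f := by
  induction hz using Submodule.span_induction with
  | mem z hzz =>
    obtain ⟨X, b, Y, rfl⟩ := hzz
    rw [map_sub]
    have h1 : phiT (K := K) p q ((X * f.mapMatrix b) ⊗ₜ[K] Y) =
        ∑ l, ∑ k, (X p l * f (b l k)) ⊗ₜ[K] Y k q := by
      simp only [phiT_tmul, Matrix.mul_apply, AlgHom.mapMatrix_apply, Matrix.map_apply,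
        sum_tmul]
      exact Finset.sum_comm
    have h2 : phiT (K := K) p q (X ⊗ₜ[K] (f.mapMatrix b * Y)) =
        ∑ l, ∑ k, X p l ⊗ₜ[K] (f (b l k) * Y k q) := by
      simp only [phiT_tmul, Matrix.mul_apply, AlgHom.mapMatrix_apply, Matrix.map_apply,
        tmul_sum]
    rw [h1, h2, ← Finset.sum_sub_distrib]
    refine Submodule.sum_mem _ fun l _ => ?_
    rw [← Finset.sum_sub_distrib]
    exact Submodule.sum_mem _ fun k _ => gen_mem_relJ f _ _ _
  | zero => simp
  | add _ _ _ _ h1 h2 => rw [map_add]; exact add_mem h1 h2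
  | smul c _ _ h => rw [_root_.map_smul]; exact Submodule.smul_mem _ c h

lemma psiT_relJ (p q : Fin n) {z} (hz : z ∈ relJ f) :
    psiT p q z ∈ relJ (f.mapMatrix (m := Fin n)) := by
  induction hz using Submodule.span_induction with
  | mem z hzz =>
    obtain ⟨x, b, y, rfl⟩ := hzz
    rw [map_sub]
    have h1 : psiT (K := K) p q ((x * f b) ⊗ₜ[K] y) =
        (single p 0 x * f.mapMatrix (single 0 0 b)) ⊗ₜ[K]
          single 0 q y := by
      simp [AlgHom.mapMatrix_apply, map_stdBasisMatrix, single_mul_single_same]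
    have h2 : psiT (K := K) p q (x ⊗ₜ[K] (f b * y)) =
        single p 0 x ⊗ₜ[K]
          (f.mapMatrix (single 0 0 b) * single 0 q y) := by
      simp [AlgHom.mapMatrix_apply, map_stdBasisMatrix, single_mul_single_same]
    rw [h1, h2]
    exact gen_mem_relJ _ _ _ _
  | zero => simp
  | add _ _ _ _ h1 h2 => rw [map_add]; exact add_mem h1 h2
  | smul c _ _ h => rw [_root_.map_smul]; exact Submodule.smul_mem _ c h

lemma corner_rel (p k l q : Fin n) (x y : A) :
    single p k x ⊗ₜ[K] single l q y -
      (if k = l then single p 0 x ⊗ₜ[K] single 0 q y else 0) ∈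
        relJ (f.mapMatrix (m := Fin n)) := by
  have key := gen_mem_relJ (f.mapMatrix (m := Fin n))
    (single p 0 x) (single 0 k (1 : B)) (single l q y)
  have e1 : single p 0 x * f.mapMatrix (single 0 k (1 : B)) =
      single p k x := by
    simp [AlgHom.mapMatrix_apply, map_stdBasisMatrix, single_mul_single_same]
  have e2 : f.mapMatrix (single 0 k (1 : B)) * single l q y =
      if k = l then single 0 q y else 0 := by
    by_cases hkl : k = l
    · subst hkl
      simp [AlgHom.mapMatrix_apply, map_stdBasisMatrix, single_mul_single_same]
    · simp [AlgHom.mapMatrix_apply, map_stdBasisMatrix, hkl,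
        single_mul_single_of_ne]
  rw [e1, e2] at key
  by_cases hkl : k = l
  · simpa [hkl] using key
  · simpa [hkl] using key

lemma sum_comm3 {i1 i2 i3 M : Type*} [Fintype i1] [Fintype i2] [Fintype i3]
    [AddCommMonoid M] (g : i1 → i2 → i3 → M) :
    ∑ a, ∑ b, ∑ c, g a b c = ∑ c, ∑ b, ∑ a, g a b c := by
  calc ∑ a, ∑ b, ∑ c, g a b c
      = ∑ a, ∑ c, ∑ b, g a b c :=
        Finset.sum_congr rfl fun a _ => Finset.sum_comm
    _ = ∑ c, ∑ a, ∑ b, g a b c := Finset.sum_comm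
    _ = ∑ c, ∑ b, ∑ a, g a b c :=
        Finset.sum_congr rfl fun c _ => Finset.sum_comm

/-- `Ψ ∘ Φ ≡ id` modulo the matrix relations. -/
lemma sum_psiT_phiT (z) :
    (∑ p, ∑ q, psiT p q (phiT (K := K) (A := A) p q z)) - z ∈
      relJ (f.mapMatrix (m := Fin n)) := by
  induction z using TensorProduct.induction_on with
  | zero => simp
  | tmul X Y =>
    have hX := matrix_eq_sum_single X
    have hY := matrix_eq_sum_single Y
    have hz : X ⊗ₜ[K] Y = ∑ l, ∑ q, ∑ p, ∑ k,
        single p k (X p k) ⊗ₜ[K] single l q (Y l q) := by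
      conv_lhs => rw [hX, hY]
      simp [sum_tmul, tmul_sum]
    have hw : (∑ p, ∑ q, psiT p q (phiT (K := K) (A := A) p q (X ⊗ₜ[K] Y))) =
        ∑ l, ∑ q, ∑ p, ∑ k, (if k = l then
          single p 0 (X p k) ⊗ₜ[K] single 0 q (Y l q) else 0) := by
      have lhs : (∑ p, ∑ q, psiT p q (phiT (K := K) (A := A) p q (X ⊗ₜ[K] Y))) =
          ∑ p, ∑ q, ∑ k,
            single p 0 (X p k) ⊗ₜ[K] single 0 q (Y k q) := by
        simp [map_sum]
      have rhs : (∑ l, ∑ q, ∑ p, ∑ k, (if k = l then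
          single p 0 (X p k) ⊗ₜ[K] single 0 q (Y l q) else 0)) =
          ∑ l, ∑ q, ∑ p,
            single p 0 (X p l) ⊗ₜ[K] single 0 q (Y l q) := by
        simp [Finset.sum_ite_eq']
      rw [lhs]
      refine (sum_comm3 _).trans ?_
      refine Finset.sum_congr rfl fun l _ => Finset.sum_congr rfl fun q _ =>
        Finset.sum_congr rfl fun p _ => ?_
      simp [Finset.sum_ite_eq']
    rw [hw]
    conv_rhs => rw [hz]
    rw [← Finset.sum_sub_distrib]
    refine Submodule.sum_mem _ fun l _ => ?_
    rw [← Finset.sum_sub_distrib]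
    refine Submodule.sum_mem _ fun q _ => ?_
    rw [← Finset.sum_sub_distrib]
    refine Submodule.sum_mem _ fun p _ => ?_
    rw [← Finset.sum_sub_distrib]
    refine Submodule.sum_mem _ fun k _ => ?_
    have h' := Submodule.neg_mem _ (corner_rel f p k l q (X p k) (Y l q))
    simpa using h'
  | add z w hz hw =>
    have : (∑ p, ∑ q, psiT p q (phiT (K := K) (A := A) p q (z + w))) - (z + w) =
        ((∑ p, ∑ q, psiT p q (phiT (K := K) (A := A) p q z)) - z) +
        ((∑ p, ∑ q, psiT p q (phiT (K := K) (A := A) p q w)) - w) := by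
      simp [map_add, Finset.sum_add_distrib]; abel
    rw [this]
    exact add_mem hz hw

end Aux3
section Aux4
set_option linter.unusedSectionVars false
variable {n : ℕ} [NeZero n] {N : ℕ}
open Matrix

/-- Common generalization of `LeftD2` and `RightD2`: equivariance constrained to
subsets `S` (left action) and `T` (right action). -/
def D2C (f : B →ₐ[K] A) (S T : Set A) : Prop :=
  ∃ N : ℕ, 0 < N ∧ ∃ (ι : A ⊗[K] A →ₗ[K] (Fin N → A)) (π : (Fin N → A) →ₗ[K] A ⊗[K] A),
    (∀ z ∈ relJ f, ι z = 0) ∧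
    (∀ a ∈ S, ∀ z, ι (lmulT a z) = fun i => a * ι z i) ∧
    (∀ a ∈ T, ∀ z, ι (rmulT a z) = fun i => ι z i * a) ∧
    (∀ a ∈ S, ∀ v : Fin N → A, π (fun i => a * v i) - lmulT a (π v) ∈ relJ f) ∧
    (∀ a ∈ T, ∀ v : Fin N → A, π (fun i => v i * a) - rmulT a (π v) ∈ relJ f) ∧
    (∀ z, π (ι z) - z ∈ relJ f)

lemma leftD2_iff_d2c (f : B →ₐ[K] A) :
    LeftD2 f ↔ D2C f (Set.range f) Set.univ := by
  constructor
  · rintro ⟨N, hN, ι, π, h0, h1, h2, h3, h4, h5⟩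
    exact ⟨N, hN, ι, π, h0, by rintro a ⟨b, rfl⟩ z; exact h1 b z,
      fun a _ z => h2 a z, by rintro a ⟨b, rfl⟩ v; exact h3 b v,
      fun a _ v => h4 a v, h5⟩
  · rintro ⟨N, hN, ι, π, h0, h1, h2, h3, h4, h5⟩
    exact ⟨N, hN, ι, π, h0, fun b z => h1 (f b) ⟨b, rfl⟩ z,
      fun a z => h2 a trivial z, fun b v => h3 (f b) ⟨b, rfl⟩ v,
      fun a v => h4 a trivial v, h5⟩

lemma rightD2_iff_d2c (f : B →ₐ[K] A) :
    RightD2 f ↔ D2C f Set.univ (Set.range f) := by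
  constructor
  · rintro ⟨N, hN, ι, π, h0, h1, h2, h3, h4, h5⟩
    exact ⟨N, hN, ι, π, h0, fun a _ z => h1 a z,
      by rintro a ⟨b, rfl⟩ z; exact h2 b z, fun a _ v => h3 a v,
      by rintro a ⟨b, rfl⟩ v; exact h4 b v, h5⟩
  · rintro ⟨N, hN, ι, π, h0, h1, h2, h3, h4, h5⟩
    exact ⟨N, hN, ι, π, h0, fun a z => h1 a trivial z,
      fun b z => h2 (f b) ⟨b, rfl⟩ z, fun a v => h3 a trivial v,
      fun b v => h4 (f b) ⟨b, rfl⟩ v, h5⟩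

/-- Matrix-amplified version of an `ι`. -/
def iotaM (ι : A ⊗[K] A →ₗ[K] (Fin N → A)) :
    (Matrix (Fin n) (Fin n) A) ⊗[K] (Matrix (Fin n) (Fin n) A) →ₗ[K]
      (Fin N → Matrix (Fin n) (Fin n) A) where
  toFun z i := Matrix.of fun p q => ι (phiT p q z) i
  map_add' z w := by funext i; ext p q; simp
  map_smul' c z := by funext i; ext p q; simp

@[simp] lemma iotaM_apply (ι : A ⊗[K] A →ₗ[K] (Fin N → A)) (z) (i) (p q : Fin n) :
    iotaM ι z i p q = ι (phiT p q z) i := rfl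

/-- Matrix-amplified version of a `π`. -/
def piM (π : (Fin N → A) →ₗ[K] A ⊗[K] A) :
    (Fin N → Matrix (Fin n) (Fin n) A) →ₗ[K]
      (Matrix (Fin n) (Fin n) A) ⊗[K] (Matrix (Fin n) (Fin n) A) where
  toFun v := ∑ p, ∑ q, psiT p q (π fun i => v i p q)
  map_add' v w := by
    have h : ∀ p q : Fin n, (fun i => (v + w) i p q) =
        (fun i => v i p q) + fun i => w i p q := fun p q => rfl
    simp only [h, map_add, Finset.sum_add_distrib]
  map_smul' c v := by
    have h : ∀ p q : Fin n, (fun i => (c • v) i p q) =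
        c • fun i => v i p q := fun p q => rfl
    simp only [h, _root_.map_smul, Finset.smul_sum, RingHom.id_apply]

@[simp] lemma piM_apply (π : (Fin N → A) →ₗ[K] A ⊗[K] A)
    (v : Fin N → Matrix (Fin n) (Fin n) A) :
    piM π v = ∑ p, ∑ q, psiT p q (π fun i => v i p q) := rfl

/-- Corner restriction of a matrix-level `ι`. -/
def iotaC (ι' : (Matrix (Fin n) (Fin n) A) ⊗[K] (Matrix (Fin n) (Fin n) A) →ₗ[K]
    (Fin N → Matrix (Fin n) (Fin n) A)) : A ⊗[K] A →ₗ[K] (Fin N → A) where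
  toFun z i := ι' (psiT 0 0 z) i 0 0
  map_add' z w := by funext i; simp
  map_smul' c z := by funext i; simp

@[simp] lemma iotaC_apply (ι' : (Matrix (Fin n) (Fin n) A) ⊗[K]
    (Matrix (Fin n) (Fin n) A) →ₗ[K] (Fin N → Matrix (Fin n) (Fin n) A)) (z) (i) :
    iotaC ι' z i = ι' (psiT 0 0 z) i 0 0 := rfl

/-- Corner restriction of a matrix-level `π`. -/
def piC (π' : (Fin N → Matrix (Fin n) (Fin n) A) →ₗ[K]
    (Matrix (Fin n) (Fin n) A) ⊗[K] (Matrix (Fin n) (Fin n) A)) :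
    (Fin N → A) →ₗ[K] A ⊗[K] A where
  toFun v := phiT 0 0 (π' fun i => single 0 0 (v i))
  map_add' v w := by
    have h : (fun i => single (0 : Fin n) (0 : Fin n) (v i + w i)) =
        (fun i => single (0 : Fin n) (0 : Fin n) (v i)) +
          fun i => single (0 : Fin n) (0 : Fin n) (w i) := by
      funext i; simp [single_add]
    exact (congrArg (fun u => phiT (K := K) (0 : Fin n) 0 (π' u)) h).trans
      (by rw [map_add, map_add])
  map_smul' c v := by
    have h : (fun i => single (0 : Fin n) (0 : Fin n) (c • v i)) =
        c • fun i => single (0 : Fin n) (0 : Fin n) (v i) := by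
      funext i; simp [← smul_single]
    exact (congrArg (fun u => phiT (K := K) (0 : Fin n) 0 (π' u)) h).trans
      (by rw [_root_.map_smul, _root_.map_smul]; rfl)

@[simp] lemma piC_apply (π' : (Fin N → Matrix (Fin n) (Fin n) A) →ₗ[K]
    (Matrix (Fin n) (Fin n) A) ⊗[K] (Matrix (Fin n) (Fin n) A)) (v : Fin N → A) :
    piC π' v = phiT 0 0 (π' fun i => single 0 0 (v i)) := rfl

end Aux4
section Aux5
set_option linter.unusedSectionVars false
variable {n : ℕ} [NeZero n]
open Matrix

lemma phiT_lmulT_corner (a : A) (w) :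
    phiT (K := K) (0 : Fin n) 0 (lmulT (single 0 0 a) w) =
      lmulT a (phiT 0 0 w) := by
  rw [phiT_lmulT, Finset.sum_eq_single (0 : Fin n)]
  · simp
  · intro l _ hl
    have e : single (0 : Fin n) 0 a 0 l = 0 := by
      simp [Matrix.single, Matrix.of_apply, Ne.symm hl]
    rw [e, lmulT_zero]
    rfl
  · simp

lemma phiT_rmulT_corner (a : A) (w) :
    phiT (K := K) (0 : Fin n) 0 (rmulT (single 0 0 a) w) =
      rmulT a (phiT 0 0 w) := by
  rw [phiT_rmulT, Finset.sum_eq_single (0 : Fin n)]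
  · simp
  · intro l _ hl
    have e : single (0 : Fin n) (0 : Fin n) a l 0 = 0 := by
      simp [Matrix.single, Matrix.of_apply, Ne.symm hl]
    rw [e, rmulT_zero]
    rfl
  · simp

lemma d2c_to_matrix (f : B →ₐ[K] A) (S T : Set A)
    (S' T' : Set (Matrix (Fin n) (Fin n) A))
    (hS' : ∀ M ∈ S', ∀ p q, M p q ∈ S) (hT' : ∀ M ∈ T', ∀ p q, M p q ∈ T) :
    D2C f S T → D2C (f.mapMatrix (m := Fin n)) S' T' := by
  rintro ⟨N, hN, ι, π, h0, h1, h2, h3, h4, h5⟩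
  refine ⟨N, hN, iotaM ι, piM π, ?_, ?_, ?_, ?_, ?_, ?_⟩
  · intro z hz
    funext i; ext p q
    rw [iotaM_apply, h0 _ (phiT_relJ f p q hz)]
    rfl
  · intro M hM z
    funext i; ext p q
    show ι (phiT p q (lmulT M z)) i = (M * iotaM ι z i) p q
    rw [phiT_lmulT, map_sum, Finset.sum_apply, Matrix.mul_apply]
    refine Finset.sum_congr rfl fun l _ => ?_
    rw [h1 (M p l) (hS' M hM p l) (phiT l q z)]
    rfl
  · intro M hM z
    funext i; ext p q
    show ι (phiT p q (rmulT M z)) i = (iotaM ι z i * M) p q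
    rw [phiT_rmulT, map_sum, Finset.sum_apply, Matrix.mul_apply]
    refine Finset.sum_congr rfl fun l _ => ?_
    rw [h2 (M l q) (hT' M hM l q) (phiT p l z)]
    rfl
  · intro M hM v
    have e1 : piM (n := n) π (fun i => M * v i) =
        ∑ p, ∑ q, ∑ l, psiT p q (π fun i => M p l * v i l q) := by
      rw [piM_apply]
      refine Finset.sum_congr rfl fun p _ => Finset.sum_congr rfl fun q _ => ?_
      have e : (fun i => (M * v i) p q) = ∑ l, fun i => M p l * v i l q := by
        funext i
        rw [Finset.sum_apply, Matrix.mul_apply]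
      rw [e, map_sum, map_sum]
    have e2 : lmulT M (piM π v) =
        ∑ p, ∑ q, ∑ l, psiT p q (lmulT (M p l) (π fun i => v i l q)) := by
      calc lmulT M (piM π v)
          = ∑ l, ∑ q, ∑ p, psiT p q (lmulT (M p l) (π fun i => v i l q)) := by
            rw [piM_apply, map_sum]
            refine Finset.sum_congr rfl fun l _ => ?_
            rw [map_sum]
            exact Finset.sum_congr rfl fun q _ => lmulT_psiT M l q _
        _ = ∑ p, ∑ q, ∑ l, psiT p q (lmulT (M p l) (π fun i => v i l q)) :=
            sum_comm3 _
    rw [e1, e2, ← Finset.sum_sub_distrib]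
    refine Submodule.sum_mem _ fun p _ => ?_
    rw [← Finset.sum_sub_distrib]
    refine Submodule.sum_mem _ fun q _ => ?_
    rw [← Finset.sum_sub_distrib]
    refine Submodule.sum_mem _ fun l _ => ?_
    rw [← map_sub]
    exact psiT_relJ f p q (h3 (M p l) (hS' M hM p l) fun i => v i l q)
  · intro M hM v
    have e1 : piM (n := n) π (fun i => v i * M) =
        ∑ p, ∑ q, ∑ l, psiT p q (π fun i => v i p l * M l q) := by
      rw [piM_apply]
      refine Finset.sum_congr rfl fun p _ => Finset.sum_congr rfl fun q _ => ?_
      have e : (fun i => (v i * M) p q) = ∑ l, fun i => v i p l * M l q := by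
        funext i
        rw [Finset.sum_apply, Matrix.mul_apply]
      rw [e, map_sum, map_sum]
    have e2 : rmulT M (piM π v) =
        ∑ p, ∑ q, ∑ l, psiT p q (rmulT (M l q) (π fun i => v i p l)) := by
      calc rmulT M (piM π v)
          = ∑ p, ∑ l, ∑ q, psiT p q (rmulT (M l q) (π fun i => v i p l)) := by
            rw [piM_apply, map_sum]
            refine Finset.sum_congr rfl fun p _ => ?_
            rw [map_sum]
            exact Finset.sum_congr rfl fun l _ => rmulT_psiT M p l _
        _ = ∑ p, ∑ q, ∑ l, psiT p q (rmulT (M l q) (π fun i => v i p l)) :=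
            Finset.sum_congr rfl fun p _ => Finset.sum_comm
    rw [e1, e2, ← Finset.sum_sub_distrib]
    refine Submodule.sum_mem _ fun p _ => ?_
    rw [← Finset.sum_sub_distrib]
    refine Submodule.sum_mem _ fun q _ => ?_
    rw [← Finset.sum_sub_distrib]
    refine Submodule.sum_mem _ fun l _ => ?_
    rw [← map_sub]
    have e3 : (fun i => v i p l * M l q) = fun i => (fun i => v i p l) i * M l q := rfl
    exact psiT_relJ f p q (h4 (M l q) (hT' M hM l q) fun i => v i p l)
  · intro z
    have e0 : ∀ p q : Fin n, (fun i => iotaM (n := n) ι z i p q) = ι (phiT p q z) :=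
      fun p q => rfl
    have key : ∀ p q : Fin n,
        psiT p q (π (ι (phiT p q z))) - psiT p q (phiT p q z) ∈
          relJ (f.mapMatrix (m := Fin n)) := by
      intro p q
      rw [← map_sub]
      exact psiT_relJ f p q (h5 _)
    have m2 := sum_psiT_phiT f z
    have esplit : piM (n := n) π (iotaM ι z) - z =
        (∑ p, ∑ q, (psiT p q (π (ι (phiT p q z))) - psiT p q (phiT p q z))) +
          ((∑ p, ∑ q, psiT p q (phiT (K := K) p q z)) - z) := by
      rw [piM_apply]
      simp only [e0, Finset.sum_sub_distrib]
      abel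
    rw [esplit]
    exact add_mem (Submodule.sum_mem _ fun p _ => Submodule.sum_mem _ fun q _ => key p q) m2

lemma d2c_of_matrix (f : B →ₐ[K] A) (S T : Set A)
    (S' T' : Set (Matrix (Fin n) (Fin n) A))
    (hS : ∀ a ∈ S, single (0 : Fin n) 0 a ∈ S')
    (hT : ∀ a ∈ T, single (0 : Fin n) 0 a ∈ T')
    (h1S : (1 : A) ∈ S) (h1T : (1 : A) ∈ T) :
    D2C (f.mapMatrix (m := Fin n)) S' T' → D2C f S T := by
  rintro ⟨N, hN, ι', π', h0, h1, h2, h3, h4, h5⟩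
  refine ⟨N, hN, iotaC ι', piC π', ?_, ?_, ?_, ?_, ?_, ?_⟩
  · intro z hz
    funext i
    rw [iotaC_apply, h0 _ (psiT_relJ f 0 0 hz)]
    rfl
  · intro a ha z
    funext i
    rw [iotaC_apply, psiT_lmulT, h1 _ (hS a ha) (psiT 0 0 z)]
    simp [single_mul_apply_same]
  · intro a ha z
    funext i
    rw [iotaC_apply, psiT_rmulT, h2 _ (hT a ha) (psiT 0 0 z)]
    simp [mul_single_apply_same]
  · intro a ha v
    have e1 : (fun i => single (0 : Fin n) (0 : Fin n) (a * v i)) =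
        fun i => single (0 : Fin n) (0 : Fin n) a *
          single (0 : Fin n) (0 : Fin n) (v i) := by
      funext i
      rw [single_mul_single_same]
    have key := phiT_relJ f 0 0
      (h3 (single 0 0 a) (hS a ha) fun i => single 0 0 (v i))
    rw [map_sub, phiT_lmulT_corner] at key
    rw [piC_apply, piC_apply]
    rw [show (fun i => single (0 : Fin n) (0 : Fin n) (a * v i)) =
        fun i => single (0 : Fin n) (0 : Fin n) a *
          single (0 : Fin n) (0 : Fin n) (v i) from e1]
    exact key
  · intro a ha v
    have e1 : (fun i => single (0 : Fin n) (0 : Fin n) (v i * a)) =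
        fun i => single (0 : Fin n) (0 : Fin n) (v i) *
          single (0 : Fin n) (0 : Fin n) a := by
      funext i
      rw [single_mul_single_same]
    have key := phiT_relJ f 0 0
      (h4 (single 0 0 a) (hT a ha) fun i => single 0 0 (v i))
    rw [map_sub, phiT_rmulT_corner] at key
    rw [piC_apply, piC_apply]
    rw [show (fun i => single (0 : Fin n) (0 : Fin n) (v i * a)) =
        fun i => single (0 : Fin n) (0 : Fin n) (v i) *
          single (0 : Fin n) (0 : Fin n) a from e1]
    exact key
  · intro z
    have hsupp : (fun i => single (0 : Fin n) (0 : Fin n) (iotaC ι' z i)) =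
        ι' (psiT 0 0 z) := by
      funext i
      have h01 : psiT (K := K) (0 : Fin n) 0 z =
          lmulT (single 0 0 (1 : A))
            (rmulT (single 0 0 (1 : A)) (psiT 0 0 z)) := by
        conv_lhs => rw [show z = lmulT (1 : A) (rmulT (1 : A) z) by
          simp [lmulT_one, rmulT_one]]
        rw [psiT_lmulT, psiT_rmulT]
      conv_rhs => rw [h01]
      rw [h1 _ (hS 1 h1S) _]
      have h2' := h2 _ (hT 1 h1T) (psiT (K := K) (0 : Fin n) 0 z)
      rw [h2']
      show single (0 : Fin n) (0 : Fin n) (ι' (psiT 0 0 z) i 0 0) =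
        single 0 0 (1 : A) * (ι' (psiT 0 0 z) i * single 0 0 (1 : A))
      rw [← mul_assoc, stdBasisMatrix_sandwich]
    rw [piC_apply, hsupp]
    have k1 := phiT_relJ f 0 0 (h5 (psiT 0 0 z))
    rw [map_sub, phiT_psiT] at k1
    exact k1

end Aux5
section Aux6
set_option linter.unusedSectionVars false
variable {n : ℕ} [NeZero n]
open Matrix

lemma leftD2_matrix_iff (f : B →ₐ[K] A) :
    LeftD2 f ↔ LeftD2 (f.mapMatrix (m := Fin n)) := by
  rw [leftD2_iff_d2c, leftD2_iff_d2c]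
  constructor
  · refine d2c_to_matrix f _ _ _ _ ?_ ?_
    · rintro M ⟨b, rfl⟩ p q
      exact ⟨b p q, by simp [AlgHom.mapMatrix_apply, Matrix.map_apply]⟩
    · exact fun M _ p q => trivial
  · refine d2c_of_matrix f _ _ _ _ ?_ ?_ ?_ trivial
    · rintro a ⟨b, rfl⟩
      exact ⟨single 0 0 b, by
        rw [AlgHom.mapMatrix_apply, map_stdBasisMatrix]⟩
    · exact fun a _ => trivial
    · exact ⟨1, map_one f⟩

lemma rightD2_matrix_iff (f : B →ₐ[K] A) :
    RightD2 f ↔ RightD2 (f.mapMatrix (m := Fin n)) := by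
  rw [rightD2_iff_d2c, rightD2_iff_d2c]
  constructor
  · refine d2c_to_matrix f _ _ _ _ ?_ ?_
    · exact fun M _ p q => trivial
    · rintro M ⟨b, rfl⟩ p q
      exact ⟨b p q, by simp [AlgHom.mapMatrix_apply, Matrix.map_apply]⟩
  · refine d2c_of_matrix f _ _ _ _ ?_ ?_ trivial ?_
    · exact fun a _ => trivial
    · rintro a ⟨b, rfl⟩
      exact ⟨single 0 0 b, by
        rw [AlgHom.mapMatrix_apply, map_stdBasisMatrix]⟩
    · exact ⟨1, map_one f⟩

end Aux6

/-- let `B` be a separable finite-dimensional algebra over a field `K`.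
Then `A | B` is depth two iff `M_n(A) | M_n(B)` is depth two. -/
theorem d2_iff_matrix_d2 (k : Type*) [Field k]
    {A B : Type*} [Ring A] [Ring B] [Algebra k A] [Algebra k B]
    [FiniteDimensional k B] (hB : IsSepAlg k B) (f : B →ₐ[k] A)
    (n : ℕ) [NeZero n] :
    (LeftD2 f ∧ RightD2 f) ↔
      (LeftD2 (AlgHom.mapMatrix f (m := Fin n)) ∧
        RightD2 (AlgHom.mapMatrix f (m := Fin n))) := by
  rw [← leftD2_matrix_iff, ← rightD2_matrix_iff]

end
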